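/- Let n be a natural number and consider the set Fin (2n) of 2n points arranged in linear order. A perfect matching of Fin (2n) is a partition of Fin (2n) into two-element blocks, and such a matching is called non-crossing if there are no indices a < b < c < d such that {a, c} and {b, d} are both blocks of the matching. Then the number of non-crossing perfect matchings of Fin (2n) equals the n-th Catalan number. (This is the count of Kauffman diagrams: the number of planar (m,n)-diagrams with no inner boxes and no loops equals the (m+n)/2-th Catalan number when m+n is even, and is 0 when m+n is odd, since an odd set admits no perfect matching.) -/

import Mathlib

open Finset

/-- A perfect matching of `Fin (2*n)`: a family of blocks, each of cardinality two,
such that every point belongs to exactly one block. -/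
def IsPerfectMatching (n : ℕ) (M : Finset (Finset (Fin (2 * n)))) : Prop :=
  (∀ B ∈ M, B.card = 2) ∧ ∀ x : Fin (2 * n), ∃! B, B ∈ M ∧ x ∈ B

/-- A matching is non-crossing if there are no indices `a < b < c < d` with
`{a, c}` and `{b, d}` both blocks of the matching. -/
def IsNonCrossing (n : ℕ) (M : Finset (Finset (Fin (2 * n)))) : Prop :=
  ¬ ∃ a b c d : Fin (2 * n), a < b ∧ b < c ∧ c < d ∧
    ({a, c} : Finset (Fin (2 * n))) ∈ M ∧ ({b, d} : Finset (Fin (2 * n))) ∈ M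

namespace NCMaux

variable {α : Type*} [LinearOrder α]

def PM (s : Finset α) (M : Finset (Finset α)) : Prop :=
  (∀ B ∈ M, B.card = 2) ∧ (∀ B ∈ M, B ⊆ s) ∧ ∀ x ∈ s, ∃! B, B ∈ M ∧ x ∈ B

def NC (M : Finset (Finset α)) : Prop :=
  ¬ ∃ a b c d : α, a < b ∧ b < c ∧ c < d ∧ ({a, c} : Finset α) ∈ M ∧ ({b, d} : Finset α) ∈ M

lemma NC.mono {M M' : Finset (Finset α)} (h : M' ⊆ M) (hM : NC M) : NC M' := by
  rintro ⟨a, b, c, d, h1, h2, h3, h4, h5⟩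
  exact hM ⟨a, b, c, d, h1, h2, h3, h h4, h h5⟩

lemma PM.card_eq {s : Finset α} {M : Finset (Finset α)} (h : PM s M) :
    s.card = 2 * M.card := by
  obtain ⟨h2, hsub, huniq⟩ := h
  have hs : s = M.biUnion id := by
    ext x
    simp only [mem_biUnion, id]
    constructor
    · intro hx
      obtain ⟨B, hB, -⟩ := huniq x hx
      exact ⟨B, hB.1, hB.2⟩
    · rintro ⟨B, hB, hxB⟩
      exact hsub B hB hxB
  rw [hs, card_biUnion]
  · simp only [id]
    rw [Finset.sum_congr rfl (fun B hB => h2 B hB), Finset.sum_const, smul_eq_mul, mul_comm]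
  · intro B hB B' hB' hne
    simp only [Function.onFun, id]
    rw [Finset.disjoint_left]
    intro x hxB hxB'
    have hx : x ∈ s := hsub B hB hxB
    obtain ⟨B0, -, hu⟩ := huniq x hx
    exact hne ((hu B ⟨hB, hxB⟩).trans (hu B' ⟨hB', hxB'⟩).symm)

lemma pm_empty {M : Finset (Finset α)} (h : PM (∅ : Finset α) M) : M = ∅ := by
  have := h.card_eq
  simp only [card_empty] at this
  rw [← Finset.card_eq_zero]
  omega

lemma pm_nc_empty : PM (∅ : Finset α) (∅ : Finset (Finset α)) ∧ NC (∅ : Finset (Finset α)) := by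
  refine ⟨⟨fun B h => absurd h (notMem_empty _), fun B h => absurd h (notMem_empty _),
    fun x hx => absurd hx (notMem_empty _)⟩, ?_⟩
  rintro ⟨a, b, c, d, -, -, -, h, -⟩
  exact notMem_empty _ h

lemma pair_eq_pair {a b p r : α} (hab : a < b) (hpr : p < r)
    (h : ({p, r} : Finset α) = {a, b}) : p = a ∧ r = b := by
  have hp : p ∈ ({a, b} : Finset α) := h ▸ (mem_insert_self p {r})
  have hr : r ∈ ({a, b} : Finset α) := h ▸ (by simp : r ∈ ({p, r} : Finset α))
  simp only [mem_insert, mem_singleton] at hp hr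
  rcases hp with rfl | rfl <;> rcases hr with rfl | rfl <;>
    first
      | exact ⟨rfl, rfl⟩
      | exact absurd hpr (lt_irrefl _)
      | exact absurd (hpr.trans hab) (lt_irrefl _)
  
lemma glue (s : Finset α) (a b : α) (hmin : ∀ x ∈ s, a ≤ x) (hb : b ∈ s) (hab : a < b)
    (ha : a ∈ s) {M1 M2 : Finset (Finset α)}
    (h1 : PM (s.filter fun x => a < x ∧ x < b) M1 ∧ NC M1)
    (h2 : PM (s.filter fun x => b < x) M2 ∧ NC M2) :
    PM s (insert {a, b} (M1 ∪ M2)) ∧ NC (insert {a, b} (M1 ∪ M2)) := by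
  obtain ⟨⟨h1c, h1s, h1u⟩, h1nc⟩ := h1
  obtain ⟨⟨h2c, h2s, h2u⟩, h2nc⟩ := h2
  have hins : ∀ B ∈ M1, ∀ x ∈ B, x ∈ s ∧ a < x ∧ x < b := by
    intro B hB x hx
    have := h1s B hB hx
    simpa only [mem_filter] using this
  have hout : ∀ B ∈ M2, ∀ x ∈ B, x ∈ s ∧ b < x := by
    intro B hB x hx
    have := h2s B hB hx
    simpa only [mem_filter] using this
  constructor
  · refine ⟨?_, ?_, ?_⟩
    · intro B hB
      rcases mem_insert.1 hB with rfl | hB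
      · exact card_pair hab.ne
      · rcases mem_union.1 hB with hB | hB
        · exact h1c B hB
        · exact h2c B hB
    · intro B hB x hx
      rcases mem_insert.1 hB with rfl | hB
      · rcases mem_insert.1 hx with rfl | hx
        · exact ha
        · rw [mem_singleton.1 hx]; exact hb
      · rcases mem_union.1 hB with hB | hB
        · exact (hins B hB x hx).1
        · exact (hout B hB x hx).1
    · intro x hx
      rcases eq_or_lt_of_le (hmin x hx) with hax | hax
      · -- x = a
        refine ⟨{a, b}, ⟨mem_insert_self _ _, by rw [← hax]; exact mem_insert_self _ _⟩, ?_⟩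
        rintro B ⟨hB, hxB⟩
        rcases mem_insert.1 hB with rfl | hB
        · rfl
        · rw [← hax] at hxB
          rcases mem_union.1 hB with hB | hB
          · exact absurd (hins B hB a hxB).2.1 (lt_irrefl a)
          · exact absurd (hab.trans (hout B hB a hxB).2) (lt_irrefl a)
      · rcases lt_trichotomy x b with hxb | rfl | hbx
        · -- a < x < b : x in inside
          have hx' : x ∈ s.filter fun y => a < y ∧ y < b := mem_filter.2 ⟨hx, hax, hxb⟩
          obtain ⟨B, ⟨hBM, hxB⟩, hu⟩ := h1u x hx'
          refine ⟨B, ⟨mem_insert_of_mem (mem_union_left _ hBM), hxB⟩, ?_⟩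
          rintro B' ⟨hB', hxB'⟩
          rcases mem_insert.1 hB' with rfl | hB'
          · rcases mem_insert.1 hxB' with rfl | hxB'
            · exact absurd hax (lt_irrefl x)
            · rw [mem_singleton.1 hxB'] at hxb; exact absurd hxb (lt_irrefl b)
          · rcases mem_union.1 hB' with hB' | hB'
            · exact hu B' ⟨hB', hxB'⟩
            · exact absurd (hxb.trans (hout B' hB' x hxB').2) (lt_irrefl x)
        · -- x = b
          refine ⟨{a, x}, ⟨mem_insert_self _ _, by simp⟩, ?_⟩
          rintro B ⟨hB, hxB⟩
          rcases mem_insert.1 hB with rfl | hB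
          · rfl
          · rcases mem_union.1 hB with hB | hB
            · exact absurd (hins B hB x hxB).2.2 (lt_irrefl x)
            · exact absurd (hout B hB x hxB).2 (lt_irrefl x)
        · -- b < x : outside
          have hx' : x ∈ s.filter fun y => b < y := mem_filter.2 ⟨hx, hbx⟩
          obtain ⟨B, ⟨hBM, hxB⟩, hu⟩ := h2u x hx'
          refine ⟨B, ⟨mem_insert_of_mem (mem_union_right _ hBM), hxB⟩, ?_⟩
          rintro B' ⟨hB', hxB'⟩
          rcases mem_insert.1 hB' with rfl | hB'
          · rcases mem_insert.1 hxB' with rfl | hxB'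
            · exact absurd hax (lt_irrefl x)
            · rw [mem_singleton.1 hxB'] at hbx; exact absurd hbx (lt_irrefl b)
          · rcases mem_union.1 hB' with hB' | hB'
            · exact absurd ((hins B' hB' x hxB').2.2.trans hbx) (lt_irrefl x)
            · exact hu B' ⟨hB', hxB'⟩
  · rintro ⟨p, q, r, t, hpq, hqr, hrt, hA, hB⟩
    have hpr : p < r := hpq.trans hqr
    have hqt : q < t := hqr.trans hrt
    rcases mem_insert.1 hA with hA | hA
    · obtain ⟨hpa, hrb⟩ := pair_eq_pair hab hpr hA
      rcases mem_insert.1 hB with hB | hB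
      · obtain ⟨hqa, -⟩ := pair_eq_pair hab hqt hB
        rw [hpa, hqa] at hpq
        exact absurd hpq (lt_irrefl a)
      · rcases mem_union.1 hB with hB | hB
        · have := (hins _ hB t (by simp)).2.2
          rw [← hrb] at this
          exact absurd (hrt.trans this) (lt_irrefl r)
        · have := (hout _ hB q (by simp)).2
          rw [← hrb] at this
          exact absurd (this.trans hqr) (lt_irrefl r)
    · rcases mem_union.1 hA with hA | hA
      · rcases mem_insert.1 hB with hB | hB
        · obtain ⟨hqa, -⟩ := pair_eq_pair hab hqt hB
          have := (hins _ hA p (by simp)).2.1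
          rw [← hqa] at this
          exact absurd (this.trans hpq) (lt_irrefl q)
        · rcases mem_union.1 hB with hB | hB
          · exact h1nc ⟨p, q, r, t, hpq, hqr, hrt, hA, hB⟩
          · have h1 := (hins _ hA r (by simp)).2.2
            have h2 := (hout _ hB q (by simp)).2
            exact absurd ((h2.trans hqr).trans h1) (lt_irrefl b)
      · rcases mem_insert.1 hB with hB | hB
        · obtain ⟨hqa, -⟩ := pair_eq_pair hab hqt hB
          have := (hout _ hA p (by simp)).2
          rw [← hqa] at hab
          exact absurd ((hab.trans this).trans hpq) (lt_irrefl q)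
        · rcases mem_union.1 hB with hB | hB
          · have h1' := (hout _ hA p (by simp)).2
            have h2' := (hins _ hB q (by simp)).2.2
            exact absurd ((h1'.trans hpq).trans h2') (lt_irrefl b)
          · exact h2nc ⟨p, q, r, t, hpq, hqr, hrt, hA, hB⟩


lemma exists_split (s : Finset α) (a : α) (ha : a ∈ s) (hmin : ∀ x ∈ s, a ≤ x)
    {M : Finset (Finset α)} (hM : PM s M ∧ NC M) :
    ∃ b ∈ s.erase a, ∃ M1 M2 : Finset (Finset α),
      (PM (s.filter fun x => a < x ∧ x < b) M1 ∧ NC M1) ∧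
      (PM (s.filter fun x => b < x) M2 ∧ NC M2) ∧
      M = insert {a, b} (M1 ∪ M2) := by
  obtain ⟨⟨hMc, hMs, hMu⟩, hNC⟩ := hM
  obtain ⟨B0, ⟨hB0M, haB0⟩, hB0u⟩ := hMu a ha
  obtain ⟨x, y, hxy, hBxy⟩ := Finset.card_eq_two.1 (hMc B0 hB0M)
  have hex : ∃ b, b ≠ a ∧ B0 = {a, b} := by
    rw [hBxy] at haB0
    simp only [mem_insert, mem_singleton] at haB0
    rcases haB0 with h | h
    · refine ⟨y, fun he => hxy ?_, by rw [hBxy, h]⟩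
      rw [← h, he]
    · refine ⟨x, fun he => hxy ?_, by rw [hBxy, h, Finset.pair_comm]⟩
      rw [he, h]
  obtain ⟨b, hbne, hB0eq⟩ := hex
  have hbB0 : b ∈ B0 := by rw [hB0eq]; simp
  have haB0' : a ∈ B0 := by rw [hB0eq]; simp
  have hbs : b ∈ s := hMs B0 hB0M hbB0
  have hab : a < b := lt_of_le_of_ne (hmin b hbs) hbne.symm
  have hbmem : b ∈ s.erase a := mem_erase.2 ⟨hbne, hbs⟩
  have key : ∀ B ∈ M, B = {a, b} ∨ (B ⊆ s.filter fun x => a < x ∧ x < b) ∨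
      (B ⊆ s.filter fun x => b < x) := by
    intro B hBM
    by_cases haB : a ∈ B
    · left
      rw [← hB0eq]
      exact (hB0u B ⟨hBM, haB⟩).trans (hB0u B0 ⟨hB0M, haB0'⟩).symm
    · by_cases hbB : b ∈ B
      · obtain ⟨B1, -, hB1u⟩ := hMu b hbs
        have e1 := hB1u B ⟨hBM, hbB⟩
        have e2 := hB1u B0 ⟨hB0M, hbB0⟩
        have : a ∈ B := by rw [e1.trans e2.symm]; exact haB0'
        exact absurd this haB
      · have aux : ∀ u v : α, u < v → B = {u, v} →
            (B ⊆ s.filter fun x => a < x ∧ x < b) ∨ (B ⊆ s.filter fun x => b < x) := by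
          intro u v huv hBe
          have huB : u ∈ B := by rw [hBe]; simp
          have hvB : v ∈ B := by rw [hBe]; simp
          have hus : u ∈ s := hMs B hBM huB
          have hvs : v ∈ s := hMs B hBM hvB
          have hau : a < u := lt_of_le_of_ne (hmin u hus) (fun h => haB (h ▸ huB))
          have hav : a < v := lt_of_le_of_ne (hmin v hvs) (fun h => haB (h ▸ hvB))
          have hub : u ≠ b := fun h => hbB (h ▸ huB)
          have hvb : v ≠ b := fun h => hbB (h ▸ hvB)
          rcases lt_or_gt_of_ne hub with hub' | hub'
          · rcases lt_or_gt_of_ne hvb with hvb' | hvb'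
            · left
              intro z hz
              rw [hBe] at hz
              simp only [mem_insert, mem_singleton] at hz
              rcases hz with rfl | rfl
              · exact mem_filter.2 ⟨hus, hau, hub'⟩
              · exact mem_filter.2 ⟨hvs, hav, hvb'⟩
            · exact absurd ⟨a, u, b, v, hau, hub', hvb',
                by rw [← hB0eq]; exact hB0M, by rw [← hBe]; exact hBM⟩ hNC
          · right
            intro z hz
            rw [hBe] at hz
            simp only [mem_insert, mem_singleton] at hz
            rcases hz with rfl | rfl
            · exact mem_filter.2 ⟨hus, hub'⟩
            · exact mem_filter.2 ⟨hvs, hub'.trans huv⟩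
        obtain ⟨u, v, huv, hBe⟩ := Finset.card_eq_two.1 (hMc B hBM)
        rcases lt_or_gt_of_ne huv with h | h
        · exact Or.inr (aux u v h hBe)
        · exact Or.inr (aux v u h (by rw [hBe, Finset.pair_comm]))
  classical
  refine ⟨b, hbmem, M.filter (· ⊆ s.filter fun x => a < x ∧ x < b),
    M.filter (· ⊆ s.filter fun x => b < x), ⟨⟨?_, ?_, ?_⟩, ?_⟩, ⟨⟨?_, ?_, ?_⟩, ?_⟩, ?_⟩
  · exact fun B hB => hMc B (mem_filter.1 hB).1
  · exact fun B hB => (mem_filter.1 hB).2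
  · -- ∃! for inside
    intro z hz
    obtain ⟨hzs, haz, hzb⟩ := mem_filter.1 hz
    obtain ⟨B, ⟨hBM, hzB⟩, hu⟩ := hMu z hzs
    have hBins : B ⊆ s.filter fun x => a < x ∧ x < b := by
      rcases key B hBM with rfl | h | h
      · simp only [mem_insert, mem_singleton] at hzB
        rcases hzB with rfl | rfl
        · exact absurd haz (lt_irrefl _)
        · exact absurd hzb (lt_irrefl _)
      · exact h
      · exact absurd (hzb.trans (mem_filter.1 (h hzB)).2) (lt_irrefl _)
    refine ⟨B, ⟨mem_filter.2 ⟨hBM, hBins⟩, hzB⟩, ?_⟩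
    rintro B' ⟨hB', hzB'⟩
    exact hu B' ⟨(mem_filter.1 hB').1, hzB'⟩
  · exact NC.mono (filter_subset _ _) hNC
  · exact fun B hB => hMc B (mem_filter.1 hB).1
  · exact fun B hB => (mem_filter.1 hB).2
  · -- ∃! for outside
    intro z hz
    obtain ⟨hzs, hbz⟩ := mem_filter.1 hz
    obtain ⟨B, ⟨hBM, hzB⟩, hu⟩ := hMu z hzs
    have hBout : B ⊆ s.filter fun x => b < x := by
      rcases key B hBM with rfl | h | h
      · simp only [mem_insert, mem_singleton] at hzB
        rcases hzB with rfl | rfl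
        · exact absurd (hab.trans hbz) (lt_irrefl _)
        · exact absurd hbz (lt_irrefl _)
      · exact absurd ((mem_filter.1 (h hzB)).2.2.trans hbz) (lt_irrefl _)
      · exact h
    refine ⟨B, ⟨mem_filter.2 ⟨hBM, hBout⟩, hzB⟩, ?_⟩
    rintro B' ⟨hB', hzB'⟩
    exact hu B' ⟨(mem_filter.1 hB').1, hzB'⟩
  · exact NC.mono (filter_subset _ _) hNC
  · -- M = insert {a, b} (M1 ∪ M2)
    ext B
    simp only [mem_insert, mem_union, mem_filter]
    constructor
    · intro hBM
      rcases key B hBM with h | h | h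
      · exact Or.inl h
      · exact Or.inr (Or.inl ⟨hBM, h⟩)
      · exact Or.inr (Or.inr ⟨hBM, h⟩)
    · rintro (rfl | ⟨h, -⟩ | ⟨h, -⟩)
      · rw [← hB0eq]; exact hB0M
      · exact h
      · exact h

lemma glue_inj (s : Finset α) (a : α) (hmin : ∀ x ∈ s, a ≤ x)
    {b b' : α} (hb : b ∈ s.erase a) (hb' : b' ∈ s.erase a)
    {M1 M2 M1' M2' : Finset (Finset α)}
    (h1 : PM (s.filter fun x => a < x ∧ x < b) M1)
    (h2 : PM (s.filter fun x => b < x) M2)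
    (h1' : PM (s.filter fun x => a < x ∧ x < b') M1')
    (h2' : PM (s.filter fun x => b' < x) M2')
    (heq : insert {a, b} (M1 ∪ M2) = insert {a, b'} (M1' ∪ M2')) :
    b = b' ∧ M1 = M1' ∧ M2 = M2' := by
  obtain ⟨hbne, hbs⟩ := mem_erase.1 hb
  obtain ⟨hbne', hbs'⟩ := mem_erase.1 hb'
  have hab : a < b := lt_of_le_of_ne (hmin b hbs) hbne.symm
  have hab' : a < b' := lt_of_le_of_ne (hmin b' hbs') hbne'.symm
  -- a is in no block of any Mi
  have hnoa : ∀ {c : α} {N : Finset (Finset α)}, a < c →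
      PM (s.filter fun x => a < x ∧ x < c) N → ∀ B ∈ N, a ∉ B := by
    intro c N _ hN B hB haB
    exact absurd (mem_filter.1 (hN.2.1 B hB haB)).2.1 (lt_irrefl a)
  have hnoa' : ∀ {c : α} {N : Finset (Finset α)}, a < c →
      PM (s.filter fun x => c < x) N → ∀ B ∈ N, a ∉ B := by
    intro c N hac hN B hB haB
    exact absurd (hac.trans (mem_filter.1 (hN.2.1 B hB haB)).2) (lt_irrefl a)
  have hbb : b = b' := by
    have h0 : ({a, b} : Finset α) ∈ insert {a, b'} (M1' ∪ M2') := by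
      rw [← heq]; exact mem_insert_self _ _
    rcases mem_insert.1 h0 with h0 | h0
    · have : b ∈ ({a, b'} : Finset α) := by rw [← h0]; simp
      simp only [mem_insert, mem_singleton] at this
      rcases this with h | h
      · exact absurd h hbne
      · exact h
    · rcases mem_union.1 h0 with h0 | h0
      · exact absurd (mem_insert_self a _) (hnoa hab' h1' _ h0)
      · exact absurd (mem_insert_self a _) (hnoa' hab' h2' _ h0)
  subst hbb
  -- now show M1 = M1' and M2 = M2'
  have main : ∀ (N1 N2 N1' N2' : Finset (Finset α)),
      PM (s.filter fun x => a < x ∧ x < b) N1 → PM (s.filter fun x => b < x) N2 →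
      PM (s.filter fun x => a < x ∧ x < b) N1' → PM (s.filter fun x => b < x) N2' →
      insert {a, b} (N1 ∪ N2) = insert {a, b} (N1' ∪ N2') →
      N1 ⊆ N1' ∧ N2 ⊆ N2' := by
    intro N1 N2 N1' N2' g1 g2 g1' g2' geq
    constructor
    · intro B hB
      have hBmem : B ∈ insert ({a, b} : Finset α) (N1' ∪ N2') := by
        rw [← geq]; exact mem_insert_of_mem (mem_union_left _ hB)
      rcases mem_insert.1 hBmem with rfl | hBmem
      · exact absurd (mem_insert_self a _) (hnoa hab g1 _ hB)
      · rcases mem_union.1 hBmem with h | h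
        · exact h
        · -- B ⊆ inside and B ⊆ outside : contradiction
          exfalso
          have hcard := g1.1 B hB
          obtain ⟨z, hz⟩ := Finset.card_pos.1 (by rw [hcard]; norm_num)
          have hz1 := (mem_filter.1 (g1.2.1 B hB hz)).2.2
          have hz2 := (mem_filter.1 (g2'.2.1 B h hz)).2
          exact absurd (hz1.trans hz2) (lt_irrefl z)
    · intro B hB
      have hBmem : B ∈ insert ({a, b} : Finset α) (N1' ∪ N2') := by
        rw [← geq]; exact mem_insert_of_mem (mem_union_right _ hB)
      rcases mem_insert.1 hBmem with rfl | hBmem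
      · exact absurd (mem_insert_self a _) (hnoa' hab g2 _ hB)
      · rcases mem_union.1 hBmem with h | h
        · exfalso
          have hcard := g2.1 B hB
          obtain ⟨z, hz⟩ := Finset.card_pos.1 (by rw [hcard]; norm_num)
          have hz1 := (mem_filter.1 (g2.2.1 B hB hz)).2
          have hz2 := (mem_filter.1 (g1'.2.1 B h hz)).2.2
          exact absurd (hz2.trans hz1) (lt_irrefl z)
        · exact h
  obtain ⟨i1, i2⟩ := main M1 M2 M1' M2' h1 h2 h1' h2' heq
  obtain ⟨i1', i2'⟩ := main M1' M2' M1 M2 h1' h2' h1 h2 heq.symm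
  exact ⟨rfl, Finset.Subset.antisymm i1 i1', Finset.Subset.antisymm i2 i2'⟩

lemma nat_card_sigma {ι : Type*} [Fintype ι] (f : ι → Type*) [∀ i, Finite (f i)] :
    Nat.card (Σ i, f i) = ∑ i, Nat.card (f i) := by
  letI : ∀ i, Fintype (f i) := fun i => Fintype.ofFinite _
  simp [Nat.card_eq_fintype_card, Fintype.card_sigma]

lemma card_split [Fintype α] (s : Finset α) (a : α) (ha : a ∈ s) (hmin : ∀ x ∈ s, a ≤ x) :
    Nat.card {M : Finset (Finset α) // PM s M ∧ NC M} =
      ∑ b : {x // x ∈ s.erase a},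
        Nat.card {M : Finset (Finset α) //
          PM (s.filter fun x => a < x ∧ x < (b : α)) M ∧ NC M} *
        Nat.card {M : Finset (Finset α) //
          PM (s.filter fun x => (b : α) < x) M ∧ NC M} := by
  classical
  set T := Σ b : {x // x ∈ s.erase a},
      {M : Finset (Finset α) // PM (s.filter fun x => a < x ∧ x < (b : α)) M ∧ NC M} ×
      {M : Finset (Finset α) // PM (s.filter fun x => (b : α) < x) M ∧ NC M} with hT
  have hGbij : Function.Bijective (fun p : T =>
      (⟨insert {a, (p.1 : α)} (p.2.1.1 ∪ p.2.2.1),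
        glue s a (p.1 : α) hmin (mem_of_mem_erase p.1.2)
          (lt_of_le_of_ne (hmin _ (mem_of_mem_erase p.1.2)) (mem_erase.1 p.1.2).1.symm)
          ha p.2.1.2 p.2.2.2⟩ : {M : Finset (Finset α) // PM s M ∧ NC M})) := by
    constructor
    · rintro ⟨⟨b, hb⟩, ⟨M1, hM1⟩, ⟨M2, hM2⟩⟩ ⟨⟨b', hb'⟩, ⟨M1', hM1'⟩, ⟨M2', hM2'⟩⟩ hGeq
      have heq : insert {a, b} (M1 ∪ M2) = insert {a, b'} (M1' ∪ M2') :=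
        congrArg Subtype.val hGeq
      obtain ⟨hbb, h11, h22⟩ := glue_inj s a hmin hb hb' hM1.1 hM2.1 hM1'.1 hM2'.1 heq
      subst hbb; subst h11; subst h22
      rfl
    · rintro ⟨M, hM⟩
      obtain ⟨b, hbmem, M1, M2, h1, h2, hMeq⟩ := exists_split s a ha hmin hM
      exact ⟨⟨⟨b, hbmem⟩, ⟨M1, h1⟩, ⟨M2, h2⟩⟩, Subtype.ext hMeq.symm⟩
  calc Nat.card {M : Finset (Finset α) // PM s M ∧ NC M}
      = Nat.card T := (Nat.card_congr (Equiv.ofBijective _ hGbij)).symm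
    _ = _ := by
        rw [hT, nat_card_sigma]
        exact Finset.sum_congr rfl fun b _ => Nat.card_prod _ _

lemma card_filter_lt_orderIso (s : Finset α) {k : ℕ} (hk : s.card = k) (j : Fin k) :
    (s.filter fun x => x < (s.orderIsoOfFin hk j : α)).card = j := by
  set e := s.orderIsoOfFin hk with he
  have himg : (s.filter fun x => x < (e j : α)) = (Finset.Iio j).image fun i => (e i : α) := by
    ext x
    simp only [mem_filter, mem_image, mem_Iio]
    constructor
    · rintro ⟨hxs, hlt⟩
      refine ⟨e.symm ⟨x, hxs⟩, ?_, by rw [OrderIso.apply_symm_apply]⟩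
      refine e.lt_iff_lt.1 ?_
      rw [OrderIso.apply_symm_apply]
      exact Subtype.coe_lt_coe.1 hlt
    · rintro ⟨i, hij, rfl⟩
      exact ⟨(e i).2, Subtype.coe_lt_coe.2 (e.lt_iff_lt.2 hij)⟩
  rw [himg, Finset.card_image_of_injective _
    (fun i1 i2 h => e.injective (Subtype.coe_injective h)), Fin.card_Iio]

lemma card_filter_gt_orderIso (s : Finset α) {k : ℕ} (hk : s.card = k) (j : Fin k) :
    (s.filter fun x => (s.orderIsoOfFin hk j : α) < x).card = k - 1 - j := by
  set e := s.orderIsoOfFin hk with he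
  have himg : (s.filter fun x => (e j : α) < x) = (Finset.Ioi j).image fun i => (e i : α) := by
    ext x
    simp only [mem_filter, mem_image, mem_Ioi]
    constructor
    · rintro ⟨hxs, hlt⟩
      refine ⟨e.symm ⟨x, hxs⟩, ?_, by rw [OrderIso.apply_symm_apply]⟩
      refine e.lt_iff_lt.1 ?_
      rw [OrderIso.apply_symm_apply]
      exact Subtype.coe_lt_coe.1 hlt
    · rintro ⟨i, hij, rfl⟩
      exact ⟨(e i).2, Subtype.coe_lt_coe.2 (e.lt_iff_lt.2 hij)⟩
  rw [himg, Finset.card_image_of_injective _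
    (fun i1 i2 h => e.injective (Subtype.coe_injective h)), Fin.card_Ioi]

lemma catalan_sum (n : ℕ) :
    ∑ j ∈ Finset.range (2*n+1),
      (if 2 ∣ j then catalan (j/2) else 0) *
      (if 2 ∣ (2*n - j) then catalan ((2*n-j)/2) else 0) = catalan (n+1) := by
  classical
  have h1 : ∀ j ∈ Finset.range (2*n+1),
      (if 2 ∣ j then catalan (j/2) else 0) *
      (if 2 ∣ (2*n - j) then catalan ((2*n-j)/2) else 0) =
      if 2 ∣ j then catalan (j/2) * catalan ((2*n-j)/2) else 0 := by
    intro j hj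
    rw [Finset.mem_range] at hj
    by_cases h : 2 ∣ j
    · have h2 : 2 ∣ (2*n - j) := by omega
      rw [if_pos h, if_pos h2, if_pos h]
    · rw [if_neg h, zero_mul, if_neg h]
  rw [Finset.sum_congr rfl h1, ← Finset.sum_filter, catalan_succ,
    Fin.sum_univ_eq_sum_range (fun i => catalan i * catalan (n - i)) (n+1)]
  refine Finset.sum_nbij' (fun j => j / 2) (fun i => 2 * i) ?_ ?_ ?_ ?_ ?_
  · intro a ha
    simp only [Finset.mem_filter, Finset.mem_range] at ha ⊢
    omega
  · intro a ha
    simp only [Finset.mem_filter, Finset.mem_range] at ha ⊢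
    exact ⟨by omega, ⟨a, rfl⟩⟩
  · intro a ha
    simp only [Finset.mem_filter, Finset.mem_range] at ha
    show 2 * (a / 2) = a
    omega
  · intro a _
    show 2 * a / 2 = a
    omega
  · intro a ha
    simp only [Finset.mem_filter, Finset.mem_range] at ha
    obtain ⟨haR, hdvd⟩ := ha
    have : (2*n - a)/2 = n - a/2 := by omega
    rw [this]

theorem count_eq [Fintype α] : ∀ (N : ℕ) (s : Finset α), s.card = N →
    Nat.card {M : Finset (Finset α) // PM s M ∧ NC M} =
      if 2 ∣ N then catalan (N / 2) else 0 := by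
  intro N
  induction N using Nat.strong_induction_on with
  | _ N ih =>
  intro s hs
  by_cases hdvd : 2 ∣ N
  case neg =>
    rw [if_neg hdvd, Nat.card_eq_zero]
    left
    constructor
    rintro ⟨M, hPM, -⟩
    exact hdvd ⟨M.card, hs ▸ hPM.card_eq⟩
  case pos =>
    obtain ⟨m, rfl⟩ := hdvd
    rw [if_pos ⟨m, rfl⟩]
    match m with
    | 0 =>
      have hs0 : s = ∅ := Finset.card_eq_zero.1 (by omega)
      subst hs0
      haveI : Unique {M : Finset (Finset α) // PM (∅ : Finset α) M ∧ NC M} :=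
        ⟨⟨⟨∅, pm_nc_empty⟩⟩, fun M => Subtype.ext (pm_empty M.2.1)⟩
      rw [Nat.card_unique]
      norm_num
    | n + 1 =>
      have hpos : 0 < s.card := by omega
      have hne : s.Nonempty := Finset.card_pos.1 hpos
      set a := s.min' hne with hadef
      have ha : a ∈ s := s.min'_mem hne
      have hmin : ∀ x ∈ s, a ≤ x := fun x hx => s.min'_le x hx
      rw [card_split s a ha hmin]
      have hkerase : (s.erase a).card = 2*n+1 := by
        rw [Finset.card_erase_of_mem ha, hs]
        omega
      set e := (s.erase a).orderIsoOfFin hkerase with hedef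
      have hinseq : ∀ b ∈ s.erase a,
          (s.filter fun x => a < x ∧ x < b) = ((s.erase a).filter fun x => x < b) := by
        intro b hb
        ext x
        simp only [mem_filter, mem_erase]
        constructor
        · rintro ⟨hxs, hax, hxb⟩
          exact ⟨⟨hax.ne', hxs⟩, hxb⟩
        · rintro ⟨⟨hxa, hxs⟩, hxb⟩
          exact ⟨hxs, lt_of_le_of_ne (hmin x hxs) (Ne.symm hxa), hxb⟩
      have houteq : ∀ b ∈ s.erase a,
          (s.filter fun x => b < x) = ((s.erase a).filter fun x => b < x) := by
        intro b hb
        obtain ⟨hba, hbs⟩ := mem_erase.1 hb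
        have hab : a < b := lt_of_le_of_ne (hmin b hbs) (Ne.symm hba)
        ext x
        simp only [mem_filter, mem_erase]
        constructor
        · rintro ⟨hxs, hbx⟩
          exact ⟨⟨(hab.trans hbx).ne', hxs⟩, hbx⟩
        · rintro ⟨⟨-, hxs⟩, hbx⟩
          exact ⟨hxs, hbx⟩
      rw [← e.toEquiv.sum_comp]
      have hterm : ∀ j : Fin (2*n+1),
          Nat.card {M : Finset (Finset α) //
            PM (s.filter fun x => a < x ∧ x < ((e.toEquiv j : {x // x ∈ s.erase a}) : α)) M ∧ NC M} *
          Nat.card {M : Finset (Finset α) //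
            PM (s.filter fun x => ((e.toEquiv j : {x // x ∈ s.erase a}) : α) < x) M ∧ NC M} =
          (if 2 ∣ (j : ℕ) then catalan ((j : ℕ)/2) else 0) *
          (if 2 ∣ (2*n - (j : ℕ)) then catalan ((2*n - (j : ℕ))/2) else 0) := by
        intro j
        show Nat.card {M : Finset (Finset α) //
            PM (s.filter fun x => a < x ∧ x < ((e j : {x // x ∈ s.erase a}) : α)) M ∧ NC M} *
          Nat.card {M : Finset (Finset α) //
            PM (s.filter fun x => ((e j : {x // x ∈ s.erase a}) : α) < x) M ∧ NC M} = _
        have hbmem : ((e j : {x // x ∈ s.erase a}) : α) ∈ s.erase a := (e j).2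
        have hc1 : (s.filter fun x => a < x ∧ x < ((e j : {x // x ∈ s.erase a}) : α)).card
            = (j : ℕ) := by
          rw [hinseq _ hbmem]
          exact card_filter_lt_orderIso (s.erase a) hkerase j
        have hc2 : (s.filter fun x => ((e j : {x // x ∈ s.erase a}) : α) < x).card
            = 2*n - (j : ℕ) := by
          rw [houteq _ hbmem]
          have := card_filter_gt_orderIso (s.erase a) hkerase j
          rw [this]
          omega
        have hj1 : (j : ℕ) < 2 * (n + 1) := by have := j.isLt; omega
        have hj2 : 2*n - (j : ℕ) < 2 * (n + 1) := by omega
        rw [ih _ hj1 _ hc1, ih _ hj2 _ hc2]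
      rw [Finset.sum_congr rfl (fun j _ => hterm j),
        Fin.sum_univ_eq_sum_range (fun m =>
          (if 2 ∣ m then catalan (m/2) else 0) *
          (if 2 ∣ (2*n - m) then catalan ((2*n - m)/2) else 0)) (2*n+1),
        catalan_sum n]
      congr 1
      omega

end NCMaux







lemma insert_eq_of_inst {β : Type*} (i1 i2 : DecidableEq β) (u : β) (t : Finset β) :
    @insert β (Finset β) (@Finset.instInsert β i1) u t =
    @insert β (Finset β) (@Finset.instInsert β i2) u t := by
  cases Subsingleton.elim i1 i2
  rfl

/-- The number of non-crossing perfect matchings of `Fin (2*n)` equals the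
`n`-th Catalan number. -/
theorem card_nonCrossing_perfectMatchings (n : ℕ) :
    Nat.card {M : Finset (Finset (Fin (2 * n))) //
      IsPerfectMatching n M ∧ IsNonCrossing n M} = catalan n := by
  have h := NCMaux.count_eq (α := Fin (2*n)) (2*n) Finset.univ (by simp)
  rw [if_pos ⟨n, rfl⟩] at h
  have hdiv : 2 * n / 2 = n := by omega
  rw [hdiv] at h
  rw [← h]
  apply Nat.card_congr
  apply Equiv.subtypeEquivRight
  intro M
  unfold IsPerfectMatching IsNonCrossing NCMaux.PM NCMaux.NC
  constructor
  · rintro ⟨⟨h1, h2⟩, h3⟩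
    refine ⟨⟨h1, fun B _ => Finset.subset_univ B, fun x _ => h2 x⟩, ?_⟩
    rintro ⟨a, b, c, d, k1, k2, k3, k4, k5⟩
    exact h3 ⟨a, b, c, d, k1, k2, k3,
      by convert k4 using 2,
      by convert k5 using 2⟩
  · rintro ⟨⟨h1, -, h2⟩, h3⟩
    refine ⟨⟨h1, fun x => h2 x (Finset.mem_univ x)⟩, ?_⟩
    rintro ⟨a, b, c, d, k1, k2, k3, k4, k5⟩
    exact h3 ⟨a, b, c, d, k1, k2, k3,
      by convert k4 using 2,
      by convert k5 using 2⟩
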